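/- For a non-trivial min-balanced system B on N with balancing coefficients λ_S, the standardized coefficient vector α_B satisfies: α_B is o-standardized (Σ_{S⊆N} α_B(S) = 0 and Σ_{S∋i} α_B(S) = 0 for each i ∈ N) and α_B(∅) ≥ 1 (in particular α_B(∅) > 0). -/

import Mathlib

open Finset

variable {ι : Type*} [DecidableEq ι]

/-- The 0/1 indicator vector of a finite set `S`. -/
def chi (S : Finset ι) : ι → ℝ := fun i => if i ∈ S then 1 else 0

/-- `B` is a min-balanced system: there are strictly positive coefficients expressing the
indicator of the carrier `⋃B` as a combination of the indicators of members of `B`, and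
those indicator vectors are linearly independent. -/
def MinBalanced (B : Finset (Finset ι)) : Prop :=
  B.Nonempty ∧
  (∃ lam : Finset ι → ℝ, (∀ S ∈ B, 0 < lam S) ∧
      ∀ i, chi (B.sup id) i = ∑ S ∈ B, lam S * chi S i) ∧
  LinearIndependent ℝ (fun S : {x // x ∈ B} => chi (S.1 : Finset ι))

/-- The standardized coefficient vector of a min-balanced system `B` with balancing
coefficients `lam` and normalizing integer `k`. -/
noncomputable def alphaB (B : Finset (Finset ι)) (lam : Finset ι → ℝ) (k : ℕ) :
    Finset ι → ℝ := fun S =>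
  if S = B.sup id then (k : ℝ)
  else if S ∈ B then -((k : ℝ) * lam S)
  else if S = ∅ then -(k : ℝ) + (k : ℝ) * ∑ T ∈ B, lam T
  else 0

theorem stmt14 [Fintype ι] (B : Finset (Finset ι)) (hmb : MinBalanced B) (hnt : 2 ≤ B.card)
    (lam : Finset ι → ℝ)
    (hpos : ∀ S ∈ B, 0 < lam S)
    (hsum : ∀ i, chi (B.sup id) i = ∑ S ∈ B, lam S * chi S i)
    (k : ℕ) (hk : 0 < k) (c : Finset ι → ℤ)
    (hc : ∀ S ∈ B, (c S : ℝ) = (k : ℝ) * lam S) :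
    (∑ S : Finset ι, alphaB B lam k S = 0) ∧
    (∀ i : ι, ∑ S ∈ Finset.univ.filter (fun S : Finset ι => i ∈ S), alphaB B lam k S = 0) ∧
    1 ≤ alphaB B lam k ∅ := by
  obtain ⟨hne, -, hli⟩ := hmb
  set M := B.sup id with hMdef
  have hempty : (∅ : Finset ι) ∉ B := by
    intro h
    exact hli.ne_zero ⟨∅, h⟩ (by funext i; simp [chi])
  have hsub : ∀ S ∈ B, S ⊆ M := fun S hS => Finset.le_sup (f := id) hS
  have hMB : M ∉ B := by
    intro hMem
    obtain ⟨a, ha, b, hb, hab⟩ := Finset.one_lt_card.mp hnt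
    have hex : ∃ S ∈ B, S ≠ M := by
      rcases eq_or_ne a M with rfl | h
      · exact ⟨b, hb, fun h' => hab h'.symm⟩
      · exact ⟨a, ha, h⟩
    obtain ⟨S0, hS0, hS0ne⟩ := hex
    have hg := (Fintype.linearIndependent_iff.mp hli)
      (fun S => if S.1 = M then lam S.1 - 1 else lam S.1) ?_ ⟨S0, hS0⟩
    · simp only [hS0ne, if_neg] at hg
      exact absurd hg (ne_of_gt (hpos S0 hS0))
    · funext i
      simp only [Finset.sum_apply, Pi.smul_apply, smul_eq_mul, Pi.zero_apply]
      rw [Finset.sum_coe_sort B (fun S => (if S = M then lam S - 1 else lam S) * chi S i)]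
      have step : ∀ S ∈ B, (if S = M then lam S - 1 else lam S) * chi S i
          = lam S * chi S i - (if S = M then chi S i else 0) := by
        intro S _; split <;> ring
      rw [Finset.sum_congr rfl step, Finset.sum_sub_distrib,
        Finset.sum_ite_eq' B M (fun S => chi S i), if_pos hMem, ← hsum i]
      ring
  have hSneM : ∀ S ∈ B, S ≠ M := fun S hS h => hMB (h ▸ hS)
  have hMnonempty : M.Nonempty := by
    obtain ⟨S, hS⟩ := hne
    have : S.Nonempty := Finset.nonempty_iff_ne_empty.mpr (by rintro rfl; exact hempty hS)
    exact this.mono (hsub S hS)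
  have hMne : M ≠ ∅ := Finset.nonempty_iff_ne_empty.mp hMnonempty
  have hαM : alphaB B lam k M = (k : ℝ) := by simp [alphaB, ← hMdef]
  have hαE : alphaB B lam k ∅ = -(k:ℝ) + (k:ℝ) * ∑ T ∈ B, lam T := by
    simp [alphaB, ← hMdef, Ne.symm hMne, hempty]
  have hαB : ∀ S ∈ B, alphaB B lam k S = -((k:ℝ) * lam S) := by
    intro S hS; simp [alphaB, ← hMdef, hSneM S hS, hS]
  have hα0 : ∀ S : Finset ι, S ≠ M → S ∉ B → S ≠ ∅ → alphaB B lam k S = 0 := by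
    intro S h1 h2 h3; simp [alphaB, ← hMdef, h1, h2, h3]
  -- Part 1
  have part1 : ∑ S : Finset ι, alphaB B lam k S = 0 := by
    have hT : ∑ S ∈ insert M (insert ∅ B), alphaB B lam k S
        = ∑ S : Finset ι, alphaB B lam k S := by
      apply Finset.sum_subset (Finset.subset_univ _)
      intro S _ hS
      simp only [Finset.mem_insert, not_or] at hS
      exact hα0 S hS.1 hS.2.2 hS.2.1
    rw [← hT, Finset.sum_insert (by simp [hMB, hMne]), Finset.sum_insert hempty,
      hαM, hαE, Finset.sum_congr rfl hαB]
    rw [Finset.sum_neg_distrib, ← Finset.mul_sum]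
    ring
  refine ⟨part1, ?_, ?_⟩
  -- Part 2
  · intro i
    by_cases hiM : i ∈ M
    · have hfil : ∑ S ∈ B.filter (fun S => i ∈ S), lam S = 1 := by
        have h1 := hsum i
        rw [show chi M i = 1 from if_pos hiM] at h1
        rw [Finset.sum_filter]
        calc (∑ S ∈ B, if i ∈ S then lam S else 0) = ∑ S ∈ B, lam S * chi S i := by
              apply Finset.sum_congr rfl
              intro S _
              simp [chi, mul_ite]
          _ = 1 := h1.symm
      have hT : ∑ S ∈ insert M (B.filter (fun S => i ∈ S)), alphaB B lam k S
          = ∑ S ∈ Finset.univ.filter (fun S : Finset ι => i ∈ S), alphaB B lam k S := by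
        apply Finset.sum_subset
        · intro S hS
          simp only [Finset.mem_insert, Finset.mem_filter] at hS ⊢
          rcases hS with rfl | ⟨hSB, hiS⟩
          · exact ⟨Finset.mem_univ _, hiM⟩
          · exact ⟨Finset.mem_univ _, hiS⟩
        · intro S hS hS'
          simp only [Finset.mem_filter, Finset.mem_univ, true_and] at hS
          simp only [Finset.mem_insert, Finset.mem_filter, not_or, not_and] at hS'
          refine hα0 S hS'.1 (fun h => hS'.2 h hS) ?_
          rintro rfl; simp at hS
      rw [← hT, Finset.sum_insert (by
        simp only [Finset.mem_filter, not_and]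
        intro hMBf; exact absurd hMBf hMB), hαM]
      rw [Finset.sum_congr rfl (fun S hS => hαB S (Finset.mem_filter.mp hS).1)]
      rw [Finset.sum_neg_distrib, ← Finset.mul_sum, hfil]
      ring
    · apply Finset.sum_eq_zero
      intro S hS
      simp only [Finset.mem_filter, Finset.mem_univ, true_and] at hS
      refine hα0 S ?_ ?_ ?_
      · rintro rfl; exact hiM hS
      · intro h; exact hiM (hsub S h hS)
      · rintro rfl; simp at hS
  -- Part 3
  · have hSpos : 0 < ∑ S ∈ B, lam S := Finset.sum_pos hpos hne
    have hcard : (M.card : ℝ) = ∑ S ∈ B, lam S * S.card := by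
      have h1 : (M.card : ℝ) = ∑ i ∈ M, chi M i := by
        simp [chi]
      rw [h1]
      have h2 : ∀ i ∈ M, chi M i = ∑ S ∈ B, lam S * chi S i := fun i _ => hsum i
      rw [Finset.sum_congr rfl h2, Finset.sum_comm]
      apply Finset.sum_congr rfl
      intro S hS
      rw [← Finset.mul_sum]
      congr 1
      have : ∑ i ∈ M, chi S i = ∑ i ∈ M ∩ S, (1:ℝ) := by
        simp only [chi]
        rw [Finset.sum_ite_mem]
      rw [this, Finset.inter_eq_right.mpr (hsub S hS)]
      simp
    have hlt : 1 < ∑ S ∈ B, lam S := by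
      by_contra h
      push_neg at h
      have hMc : 1 ≤ (M.card : ℝ) := by
        exact_mod_cast Finset.card_pos.mpr hMnonempty
      have hb : ∑ S ∈ B, lam S * S.card ≤ ∑ S ∈ B, lam S * ((M.card:ℝ) - 1) := by
        apply Finset.sum_le_sum
        intro S hS
        apply mul_le_mul_of_nonneg_left _ (le_of_lt (hpos S hS))
        have hlt' : S.card < M.card :=
          Finset.card_lt_card (Finset.ssubset_iff_subset_ne.mpr ⟨hsub S hS, hSneM S hS⟩)
        have : (S.card : ℝ) + 1 ≤ (M.card : ℝ) := by exact_mod_cast hlt'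
        linarith
      rw [← Finset.sum_mul] at hb
      rw [hcard] at *
      nlinarith
    have hcsum : ((∑ S ∈ B, c S : ℤ) : ℝ) = (k:ℝ) * ∑ S ∈ B, lam S := by
      push_cast
      rw [Finset.mul_sum]
      exact Finset.sum_congr rfl hc
    have hkn : (k : ℤ) < ∑ S ∈ B, c S := by
      have : (k:ℝ) < ((∑ S ∈ B, c S : ℤ) : ℝ) := by
        rw [hcsum]
        nlinarith [hlt, (by exact_mod_cast hk : (0:ℝ) < (k:ℝ))]
      exact_mod_cast this
    have hkn' : (k : ℤ) + 1 ≤ ∑ S ∈ B, c S := hkn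
    have : (k:ℝ) + 1 ≤ ((∑ S ∈ B, c S : ℤ) : ℝ) := by exact_mod_cast hkn'
    rw [hαE, ← hcsum] at *
    linarith
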